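/- Let K be an elementary extension of ℚ_p, V the convex hull of ℚ_p, and μ the ideal of infinitesimals. Let f(x) = a_n x^n + ... + a_1 x + a_0 be a polynomial over K with all coefficients in V and leading coefficient a_n ∉ μ. Then every root b ∈ K of f lies in V. -/

import Mathlib

open FirstOrder Language Set FirstOrder.Ring

noncomputable local instance {p : ℕ} [Fact p.Prime] : CompatibleRing ℚ_[p] :=
  compatibleRingOfRing _

/-- The data of an elementary extension `K` of `ℚ_p` in the language of rings,
together with its valuation (with value group `Γ` extending `ℤ`) and the valuation
topology on `K`. -/
structure PadicElemExt (p : ℕ) [Fact p.Prime] (K : Type*) [Field K] [CompatibleRing K]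
    (Γ : Type*) [AddCommGroup Γ] [LinearOrder Γ] [IsOrderedAddMonoid Γ] [TopologicalSpace K] where
  /-- the elementary embedding `ℚ_p ≼ K` in the language of rings -/
  e : ℚ_[p] ↪ₑ[Language.ring] K
  /-- the embedding of `ℤ` into the value group of `K` -/
  ι : ℤ →+ Γ
  ι_mono : StrictMono ι
  /-- the valuation on `K` (the value at `0` is junk) -/
  v : K → Γ
  v_mul : ∀ x y : K, x ≠ 0 → y ≠ 0 → v (x * y) = v x + v y
  v_add : ∀ x y : K, x ≠ 0 → y ≠ 0 → x + y ≠ 0 → min (v x) (v y) ≤ v (x + y)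
  v_ext : ∀ a : ℚ_[p], a ≠ 0 → v (e a) = ι a.valuation
  topBasis : ∀ s : Set K, IsOpen s ↔
    ∀ a ∈ s, ∃ γ : Γ, ∀ b : K, (b = a ∨ γ < v (b - a)) → b ∈ s

variable {p : ℕ} [Fact p.Prime] {K Γ : Type*} [Field K] [CompatibleRing K]
  [AddCommGroup Γ] [LinearOrder Γ] [IsOrderedAddMonoid Γ] [TopologicalSpace K]

/-- The convex hull `V` of `ℚ_p` in `K`: elements of bounded valuation from below by `ℤ`. -/
def PadicElemExt.V (S : PadicElemExt p K Γ) : Set K :=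
  {x | x = 0 ∨ ∃ n : ℤ, S.ι n < S.v x}

/-- The set `μ` of infinitesimals of `K` over `ℚ_p`. -/
def PadicElemExt.μ (S : PadicElemExt p K Γ) : Set K :=
  {x | x = 0 ∨ ∀ n : ℤ, S.ι n < S.v x}

/-- Topological dimension of a subset of `M^n`: the largest `k` such that the image of some
projection onto `k` coordinates has nonempty interior. -/
noncomputable def pdim {M : Type*} [TopologicalSpace M] {n : ℕ} (X : Set (Fin n → M)) : ℕ :=
  sSup {k : ℕ | ∃ r : Fin k → Fin n, StrictMono r ∧
    (interior ((fun x : Fin n → M => x ∘ r) '' X)).Nonempty}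

lemma PadicElemExt.v_one (S : PadicElemExt p K Γ) : S.v 1 = 0 := by
  have h := S.v_ext 1 one_ne_zero
  have he : S.e 1 = 1 := by
    simpa [constantMap, CompatibleRing.funMap_one] using
      S.e.map_constants (oneFunc : Language.ring.Constants)
  rw [he] at h
  simpa using h

lemma PadicElemExt.v_neg_one (S : PadicElemExt p K Γ) : S.v (-1) = 0 := by
  have h := S.v_mul (-1) (-1) (by norm_num) (by norm_num)
  rw [neg_mul_neg, one_mul, S.v_one] at h
  rcases lt_trichotomy (S.v (-1)) 0 with hlt | heq | hgt
  · exfalso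
    have h2 := add_lt_add hlt hlt
    rw [add_zero, ← h] at h2
    exact lt_irrefl _ h2
  · exact heq
  · exfalso
    have h2 := add_lt_add hgt hgt
    rw [add_zero, ← h] at h2
    exact lt_irrefl _ h2

lemma PadicElemExt.v_neg (S : PadicElemExt p K Γ) (x : K) (hx : x ≠ 0) :
    S.v (-x) = S.v x := by
  have h := S.v_mul (-1) x (by norm_num) hx
  rw [neg_one_mul, S.v_neg_one, zero_add] at h
  exact h

lemma PadicElemExt.v_inv (S : PadicElemExt p K Γ) (x : K) (hx : x ≠ 0) :
    S.v x⁻¹ = -S.v x := by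
  have h := S.v_mul x x⁻¹ hx (inv_ne_zero hx)
  rw [mul_inv_cancel₀ hx, S.v_one] at h
  rw [eq_neg_iff_add_eq_zero, add_comm]
  exact h.symm

lemma PadicElemExt.mu_add (S : PadicElemExt p K Γ) {x y : K}
    (hx : x ∈ S.μ) (hy : y ∈ S.μ) : x + y ∈ S.μ := by
  by_cases hx0 : x = 0
  · simpa [hx0] using hy
  by_cases hy0 : y = 0
  · simpa [hy0] using hx
  by_cases hxy : x + y = 0
  · exact Or.inl hxy
  rcases hx with rfl | hx
  · exact absurd rfl hx0
  rcases hy with rfl | hy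
  · exact absurd rfl hy0
  exact Or.inr fun n =>
    lt_of_lt_of_le (lt_min (hx n) (hy n)) (S.v_add x y hx0 hy0 hxy)

lemma PadicElemExt.mu_neg (S : PadicElemExt p K Γ) {x : K}
    (hx : x ∈ S.μ) : -x ∈ S.μ := by
  by_cases hx0 : x = 0
  · exact Or.inl (by simp [hx0])
  rcases hx with rfl | hx
  · exact absurd rfl hx0
  exact Or.inr fun n => by rw [S.v_neg x hx0]; exact hx n

lemma PadicElemExt.V_mul_mu (S : PadicElemExt p K Γ) {x y : K}
    (hx : x ∈ S.V) (hy : y ∈ S.μ) : x * y ∈ S.μ := by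
  by_cases hx0 : x = 0
  · exact Or.inl (by simp [hx0])
  by_cases hy0 : y = 0
  · exact Or.inl (by simp [hy0])
  rcases hx with rfl | ⟨m, hm⟩
  · exact absurd rfl hx0
  rcases hy with rfl | hy
  · exact absurd rfl hy0
  refine Or.inr fun n => ?_
  rw [S.v_mul x y hx0 hy0]
  calc S.ι n = S.ι m + S.ι (n - m) := by rw [← map_add]; congr 1; omega
    _ < S.v x + S.v y := add_lt_add hm (hy (n - m))

lemma PadicElemExt.mu_subset_V (S : PadicElemExt p K Γ) {x : K}
    (hx : x ∈ S.μ) : x ∈ S.V := by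
  rcases hx with rfl | hx
  · exact Or.inl rfl
  · exact Or.inr ⟨0, hx 0⟩

lemma PadicElemExt.mu_pow (S : PadicElemExt p K Γ) {x : K}
    (hx : x ∈ S.μ) (k : ℕ) (hk : 1 ≤ k) : x ^ k ∈ S.μ := by
  induction k with
  | zero => omega
  | succ n ih =>
    rcases Nat.eq_or_lt_of_le hk with h | h
    · simpa [← h] using hx
    · have hn : 1 ≤ n := by omega
      have h2 := S.V_mul_mu (S.mu_subset_V (ih hn)) hx
      rw [pow_succ]
      exact h2

lemma PadicElemExt.inv_mem_mu (S : PadicElemExt p K Γ) {x : K}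
    (hx : x ∉ S.V) : x⁻¹ ∈ S.μ := by
  have hx0 : x ≠ 0 := fun h => hx (Or.inl h)
  refine Or.inr fun n => ?_
  rw [S.v_inv x hx0]
  have hle : S.v x ≤ S.ι (-n - 1) := by
    by_contra h
    exact hx (Or.inr ⟨-n - 1, lt_of_not_ge h⟩)
  have h1 : S.ι n < S.ι (n + 1) := S.ι_mono (by omega)
  have h2 : S.ι (n + 1) = -S.ι (-n - 1) := by rw [← map_neg]; congr 1; omega
  have h3 : -S.ι (-n - 1) ≤ -S.v x := neg_le_neg hle
  exact lt_of_lt_of_le (h2 ▸ h1) h3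

/-- Let `f = a_n x^n + ... + a_0` over `K` with all coefficients in `V` and
leading coefficient `a_n ∉ μ`. Then every root `b ∈ K` of `f` lies in `V`. -/
theorem stmt_11 (S : PadicElemExt p K Γ)
    (f : Polynomial K) (hf : ∀ i, f.coeff i ∈ S.V) (hlead : f.leadingCoeff ∉ S.μ)
    (b : K) (hb : f.eval b = 0) :
    b ∈ S.V := by
  by_contra hbV
  have hb0 : b ≠ 0 := fun h => hbV (Or.inl h)
  have hbinv : b⁻¹ ∈ S.μ := S.inv_mem_mu hbV
  have hf0 : f ≠ 0 := by
    rintro rfl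
    exact hlead (Or.inl (by simp))
  have hlc0 : f.leadingCoeff ≠ 0 := fun h => hlead (Or.inl h)
  have hdpos : 0 < f.natDegree := by
    rcases Nat.eq_zero_or_pos f.natDegree with h | h
    · exfalso
      obtain ⟨a, rfl⟩ := Polynomial.natDegree_eq_zero.mp h
      simp only [Polynomial.eval_C] at hb
      subst hb
      exact hf0 (by simp)
    · exact h
  set d := f.natDegree with hd
  have hsum : (∑ i ∈ Finset.range d, f.coeff i * b ^ i) + f.coeff d * b ^ d = 0 := by
    rw [← Finset.sum_range_succ]
    rw [← Polynomial.eval_eq_sum_range]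
    exact hb
  set T := ∑ i ∈ Finset.range d, f.coeff i * b ^ i with hT
  have h1 : f.coeff d * b ^ d = -T := eq_neg_of_add_eq_zero_right hsum
  have key : f.coeff d = -T * (b⁻¹) ^ d := by
    have h2 : f.coeff d = (f.coeff d * b ^ d) * (b⁻¹) ^ d := by
      rw [mul_assoc, ← mul_pow, mul_inv_cancel₀ hb0, one_pow, mul_one]
    rw [h2, h1]
  have hterm : ∀ i ∈ Finset.range d, f.coeff i * b ^ i * (b⁻¹) ^ d ∈ S.μ := by
    intro i hi
    rw [Finset.mem_range] at hi
    have hpow : b ^ i * (b⁻¹) ^ d = (b⁻¹) ^ (d - i) := by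
      have h3 : (b⁻¹) ^ d = (b⁻¹) ^ i * (b⁻¹) ^ (d - i) := by
        rw [← pow_add]; congr 1; omega
      rw [h3, ← mul_assoc, ← mul_pow, mul_inv_cancel₀ hb0, one_pow, one_mul]
    rw [mul_assoc, hpow]
    exact S.V_mul_mu (hf i) (S.mu_pow hbinv (d - i) (by omega))
  have hTmu : T * (b⁻¹) ^ d ∈ S.μ := by
    rw [hT, Finset.sum_mul]
    exact Finset.sum_induction _ (· ∈ S.μ) (fun a b ha hb => S.mu_add ha hb)
      (Or.inl rfl) hterm
  refine hlead ?_
  rw [Polynomial.leadingCoeff, ← hd, key, neg_mul]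
  exact S.mu_neg hTmu
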